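/- Let λ be a real number. If some derivation of the Lie algebra rh₃ = h₃ × ℝ has characteristic polynomial X²(X − 1)(X − λ), then λ ∈ {−1, 0, 1}. -/

import Mathlib

set_option linter.unusedTactic false
set_option linter.unnecessarySeqFocus false
set_option linter.unreachableTactic false

open Polynomial

/-- The 3-dimensional Heisenberg Lie algebra `h₃`: the real vector space `Fin 3 → ℝ`
with basis `e₁, e₂, e₃` and only nonzero bracket `⁅e₁, e₂⁆ = e₃`. -/
def H3 : Type := Fin 3 → ℝ

noncomputable instance : AddCommGroup H3 := Pi.addCommGroup
noncomputable instance : Module ℝ H3 := Pi.module _ _ _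
instance : FiniteDimensional ℝ H3 := inferInstanceAs (FiniteDimensional ℝ (Fin 3 → ℝ))

lemma H3.add_apply (x y : H3) (i : Fin 3) : (x + y) i = x i + y i := rfl
lemma H3.smul_apply (r : ℝ) (x : H3) (i : Fin 3) : (r • x) i = r * x i := rfl

noncomputable instance : LieRing H3 :=
  { (inferInstance : AddCommGroup H3) with
    bracket := fun x y => ![0, 0, x 0 * y 1 - x 1 * y 0]
    add_lie := by
      intro x y z
      show (![_,_,_] : Fin 3 → ℝ) = ![_,_,_] + ![_,_,_]
      funext i
      fin_cases i <;> simp [H3.add_apply] <;> erw [H3.add_apply] <;> simp <;> ring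
    lie_add := by
      intro x y z
      show (![_,_,_] : Fin 3 → ℝ) = ![_,_,_] + ![_,_,_]
      funext i
      fin_cases i <;> simp [H3.add_apply] <;> erw [H3.add_apply] <;> simp <;> ring
    lie_self := by
      intro x
      show (![_,_,_] : Fin 3 → ℝ) = 0
      funext i
      fin_cases i <;> simp <;> ring
    leibniz_lie := by
      intro x y z
      show (![_,_,_] : Fin 3 → ℝ) = ![_,_,_] + ![_,_,_]
      funext i
      fin_cases i <;> simp [H3.add_apply] <;> erw [H3.add_apply] <;> simp <;> ring }

noncomputable instance : LieAlgebra ℝ H3 :=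
  { lie_smul := by
      intro r x y
      show (![_,_,_] : Fin 3 → ℝ) = r • ![_,_,_]
      funext i
      fin_cases i <;> simp [H3.smul_apply] <;> erw [H3.smul_apply] <;> simp <;> ring }

/-- `rh₃ := h₃ × ℝ`, the product Lie algebra of the Heisenberg Lie algebra `h₃` with the
1-dimensional abelian Lie algebra `ℝ`. -/
def RH3 : Type := H3 × ℝ

noncomputable instance : AddCommGroup RH3 := inferInstanceAs (AddCommGroup (H3 × ℝ))
noncomputable instance : Module ℝ RH3 := inferInstanceAs (Module ℝ (H3 × ℝ))
instance : FiniteDimensional ℝ RH3 := inferInstanceAs (FiniteDimensional ℝ (H3 × ℝ))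

noncomputable instance : LieRing RH3 :=
  { (inferInstance : AddCommGroup RH3) with
    bracket := fun x y => (⁅x.1, y.1⁆, 0)
    add_lie := by
      intro x y z
      show (⁅x.1 + y.1, z.1⁆, (0:ℝ)) = (⁅x.1, z.1⁆ + ⁅y.1, z.1⁆, 0 + 0)
      simp [add_lie]
    lie_add := by
      intro x y z
      show (⁅x.1, y.1 + z.1⁆, (0:ℝ)) = (⁅x.1, y.1⁆ + ⁅x.1, z.1⁆, 0 + 0)
      simp [lie_add]
    lie_self := by
      intro x
      show (⁅x.1, x.1⁆, (0:ℝ)) = (0, 0)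
      simp
    leibniz_lie := by
      intro x y z
      show (⁅x.1, ⁅y.1, z.1⁆⁆, (0:ℝ)) = (⁅⁅x.1, y.1⁆, z.1⁆ + ⁅y.1, ⁅x.1, z.1⁆⁆, 0 + 0)
      rw [← leibniz_lie]
      simp }

noncomputable instance : LieAlgebra ℝ RH3 :=
  { lie_smul := by
      intro r x y
      show (⁅x.1, r • y.1⁆, (0:ℝ)) = (r • ⁅x.1, y.1⁆, r • (0:ℝ))
      simp }

noncomputable def rh3Equiv : RH3 ≃ₗ[ℝ] (Fin 4 → ℝ) where
  toFun x := ![x.1 0, x.1 1, x.1 2, x.2]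
  invFun v := (![v 0, v 1, v 2], v 3)
  map_add' x y := by funext i; fin_cases i <;> rfl
  map_smul' r x := by funext i; fin_cases i <;> rfl
  left_inv x := by
    obtain ⟨x1, x2⟩ := x
    refine Prod.ext ?_ rfl
    funext i; fin_cases i <;> rfl
  right_inv v := by funext i; fin_cases i <;> rfl

lemma rh3Equiv_apply (x : RH3) : rh3Equiv x = ![x.1 0, x.1 1, x.1 2, x.2] := rfl

noncomputable def rh3Basis : Module.Basis (Fin 4) ℝ RH3 := Module.Basis.ofEquivFun rh3Equiv

lemma rh3Basis_apply (j : Fin 4) :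
    rh3Basis j = ![((![1,0,0] : Fin 3 → ℝ), (0:ℝ)), ((![0,1,0] : Fin 3 → ℝ), (0:ℝ)),
      ((![0,0,1] : Fin 3 → ℝ), (0:ℝ)), ((![0,0,0] : Fin 3 → ℝ), (1:ℝ))] j := by
  rw [show rh3Basis j = rh3Equiv.symm (Pi.single j 1) from
    congrFun (Module.Basis.coe_ofEquivFun rh3Equiv) j]
  show (![_,_,_], _) = _
  fin_cases j <;>
    · refine Prod.ext ?_ (by simp [Pi.single_apply])
      funext i; fin_cases i <;> simp [Pi.single_apply]

-- bracket formulas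
lemma rh3_bracket (x y : RH3) :
    ⁅x, y⁆ = ((![0, 0, x.1 0 * y.1 1 - x.1 1 * y.1 0] : Fin 3 → ℝ), (0:ℝ)) := rfl

example : True := trivial

lemma rh3_add_fst (x y : RH3) (i : Fin 3) : (x + y).1 i = x.1 i + y.1 i := rfl
lemma rh3_add_snd (x y : RH3) : (x + y).2 = x.2 + y.2 := rfl

lemma rh3_zero_fst (i : Fin 3) : (0 : RH3).1 i = 0 := rfl

lemma charpoly_aux (a b c d g h i j r s : ℝ) :
    (Matrix.of ![![a,b,0,0],![c,d,0,0],![g,i,a+d,r],![h,j,0,s]]).charpoly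
      = (X^2 - C (a+d)*X + C (a*d-b*c)) * (X - C (a+d)) * (X - C s) := by
  show (Matrix.charmatrix _).det = _
  have hc : Matrix.charmatrix (Matrix.of ![![a,b,0,0],![c,d,0,0],![g,i,a+d,r],![h,j,0,s]])
      = Matrix.of ![![X - C a, -C b, 0, 0], ![-C c, X - C d, 0, 0],
          ![-C g, -C i, X - C (a+d), -C r], ![-C h, -C j, 0, X - C s]] := by
    ext i' j'
    fin_cases i' <;> fin_cases j' <;>
      simp [Matrix.charmatrix_apply, Matrix.diagonal_apply]
  rw [hc]
  rw [Matrix.det_succ_row_zero]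
  simp [Fin.sum_univ_succ, Matrix.det_fin_three, Matrix.submatrix_apply, Fin.succAbove]
  ring

lemma lam_cases (t dl s lam : ℝ) (e3 : -(2*t+s) = -(1+lam))
    (e2 : dl + t^2 + 2*t*s = lam)
    (e1 : -(dl*(t+s) + t^2*s) = -0) (e0 : dl*t*s = 0) :
    lam = -1 ∨ lam = 0 ∨ lam = 1 := by
  have e1' : dl*(t+s) + t^2*s = 0 := by linarith
  have e3' : 2*t + s = 1 + lam := by linarith
  rcases mul_eq_zero.mp e0 with h | hs
  · rcases mul_eq_zero.mp h with hdl | ht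
    · subst hdl
      have : t^2*s = 0 := by nlinarith
      rcases mul_eq_zero.mp this with ht2 | hs
      · have ht : t = 0 := by nlinarith [sq_nonneg t]
        subst ht; right; left; nlinarith
      · subst hs
        have ht1 : (t-1)^2 = 0 := by nlinarith
        have : t = 1 := by nlinarith [sq_nonneg (t-1)]
        right; right; nlinarith
    · subst ht
      have : dl*s = 0 := by nlinarith
      rcases mul_eq_zero.mp this with hdl | hs
      · right; left; nlinarith
      · subst hs; left; nlinarith
  · subst hs
    have : dl*t = 0 := by nlinarith
    rcases mul_eq_zero.mp this with hdl | ht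
    · have ht1 : (t-1)^2 = 0 := by nlinarith
      have : t = 1 := by nlinarith [sq_nonneg (t-1)]
      right; right; nlinarith
    · subst ht; left; nlinarith

lemma coeff_eq_aux (t dl s lam : ℝ)
    (hpq : (X^2 - C t*X + C dl) * (X - C t) * (X - C s) = X^2*(X-1)*(X - C lam)) :
    lam = -1 ∨ lam = 0 ∨ lam = 1 := by
  have hl : (X^2 - C t*X + C dl) * (X - C t) * (X - C s)
      = X^4 + C (-(2*t+s)) * X^3 + C (dl + t^2 + 2*t*s) * X^2
        + C (-(dl*(t+s) + t^2*s)) * X + C (dl*t*s) := by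
    simp only [map_neg, map_add, map_mul, map_pow, map_ofNat]
    ring
  have hr : X^2*(X-1)*(X - C lam)
      = X^4 + C (-(1+lam)) * X^3 + C lam * X^2 + C (-(0:ℝ)) * X + C (0:ℝ) := by
    simp only [map_neg, map_add, map_mul, map_pow, map_ofNat, map_zero, map_one]
    ring
  rw [hl, hr] at hpq
  have e3 := congrArg (fun p => Polynomial.coeff p 3) hpq
  have e2 := congrArg (fun p => Polynomial.coeff p 2) hpq
  have e1 := congrArg (fun p => Polynomial.coeff p 1) hpq
  have e0 := congrArg (fun p => Polynomial.coeff p 0) hpq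
  simp only [Polynomial.coeff_add, Polynomial.coeff_C_mul, Polynomial.coeff_X_pow,
    Polynomial.coeff_C, Polynomial.coeff_X, Polynomial.coeff_X_one] at e3 e2 e1 e0
  norm_num at e3 e2 e1 e0
  have e0' : dl*t*s = 0 := by rcases e0 with (h|h)|h <;> rw [h] <;> ring
  exact lam_cases t dl s lam (by linarith) (by linarith) (by linarith) e0'

example : True := trivial

/-- If some derivation of `rh₃ = h₃ × ℝ` has characteristic polynomial
`X² * (X - 1) * (X - λ)`, then `λ ∈ {-1, 0, 1}`. -/
theorem charpoly_derivation_rh3_restrict_lambda (lam : ℝ)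
    (h : ∃ D : LieDerivation ℝ RH3 RH3,
      LinearMap.charpoly D.toLinearMap = X ^ 2 * (X - 1) * (X - C lam)) :
    lam = -1 ∨ lam = 0 ∨ lam = 1 := by
  obtain ⟨D, hD⟩ := h
  rw [← LinearMap.charpoly_toMatrix D.toLinearMap rh3Basis] at hD
  have hME : ∀ i j, LinearMap.toMatrix rh3Basis rh3Basis D.toLinearMap i j
      = rh3Equiv (D (rh3Basis j)) i := by
    intro i j
    rw [LinearMap.toMatrix_apply]
    rfl
  set u := D (rh3Basis 0) with hu
  set v := D (rh3Basis 1) with hv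
  set w := D (rh3Basis 3) with hw
  have key3 : D (rh3Basis 2) = ((![0, 0, u.1 0 + v.1 1] : Fin 3 → ℝ), (0:ℝ)) := by
    have h2 : (rh3Basis 2 : RH3) = ⁅rh3Basis 0, rh3Basis 1⁆ := by
      rw [rh3_bracket, rh3Basis_apply 0, rh3Basis_apply 1, rh3Basis_apply 2]
      simp; rfl
    rw [h2, LieDerivation.apply_lie_eq_add, ← hu, ← hv,
      rh3_bracket, rh3_bracket, rh3Basis_apply 0, rh3Basis_apply 1]
    refine Prod.ext ?_ (by erw [rh3_add_snd]; simp)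
    funext i
    fin_cases i <;> erw [rh3_add_fst] <;> simp <;> ring
  have key4a : w.1 0 = 0 := by
    have h0 : ⁅rh3Basis 1, rh3Basis 3⁆ = (0:RH3) := by
      rw [rh3_bracket, rh3Basis_apply 1, rh3Basis_apply 3]
      refine Prod.ext ?_ rfl
      funext i; fin_cases i <;> norm_num <;> erw [rh3_zero_fst] <;> simp
    have h1 : (0:RH3) = ⁅rh3Basis 1, D (rh3Basis 3)⁆ + ⁅D (rh3Basis 1), rh3Basis 3⁆ := by
      rw [← LieDerivation.apply_lie_eq_add, h0, map_zero]
    rw [← hv, ← hw, rh3_bracket, rh3_bracket, rh3Basis_apply 1, rh3Basis_apply 3] at h1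
    have h2 := congrArg (fun z : RH3 => z.1 2) h1
    erw [rh3_add_fst, rh3_zero_fst] at h2; simp at h2
    linarith
  have key4b : w.1 1 = 0 := by
    have h0 : ⁅rh3Basis 0, rh3Basis 3⁆ = (0:RH3) := by
      rw [rh3_bracket, rh3Basis_apply 0, rh3Basis_apply 3]
      refine Prod.ext ?_ rfl
      funext i; fin_cases i <;> norm_num <;> erw [rh3_zero_fst] <;> simp
    have h1 : (0:RH3) = ⁅rh3Basis 0, D (rh3Basis 3)⁆ + ⁅D (rh3Basis 0), rh3Basis 3⁆ := by
      rw [← LieDerivation.apply_lie_eq_add, h0, map_zero]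
    rw [← hu, ← hw, rh3_bracket, rh3_bracket, rh3Basis_apply 0, rh3Basis_apply 3] at h1
    have h2 := congrArg (fun z : RH3 => z.1 2) h1
    erw [rh3_add_fst, rh3_zero_fst] at h2; simp at h2
    linarith
  have hM : LinearMap.toMatrix rh3Basis rh3Basis D.toLinearMap = Matrix.of
      ![![u.1 0, v.1 0, 0, 0],
        ![u.1 1, v.1 1, 0, 0],
        ![u.1 2, v.1 2, u.1 0 + v.1 1, w.1 2],
        ![u.2, v.2, 0, w.2]] := by
    ext i j
    rw [hME i j]
    fin_cases j <;> fin_cases i <;>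
      simp [rh3Equiv_apply, key3, key4a, key4b, ← hu, ← hv, ← hw] <;> erw [rh3Equiv_apply] <;> simp
  rw [hM, charpoly_aux] at hD
  exact coeff_eq_aux _ _ _ lam hD
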